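/- Let f = (f_n)_{n=0}^M be a sequence in X with f_0 + f_1 + ⋯ + f_M = 0. Then for every 0 ≤ n ≤ M, ‖f_n‖ ≤ c_A · ‖f‖_0^{1/2} · ‖Df‖_0^{1/2}, where c_A = √(2 + √2/2). -/

import Mathlib

noncomputable def cA : ℝ := Real.sqrt (2 + Real.sqrt 2 / 2)

/-- backward difference quotient of a sequence, `(Dq τ f) n = (f n - f (n-1))/τ`. -/
noncomputable def Dq {X : Type*} [NormedAddCommGroup X] [NormedSpace ℝ X] (τ : ℝ) (f : ℕ → X) : ℕ → X :=
  fun n => τ⁻¹ • (f n - f (n - 1))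

/-- discrete `L²` norm `(τ Σ_{n=a}^{b} ‖f n‖²)^{1/2}`. -/
noncomputable def seqNorm0 {X : Type*} [NormedAddCommGroup X]
    (τ : ℝ) (a b : ℕ) (f : ℕ → X) : ℝ :=
  Real.sqrt (τ * ∑ n ∈ Finset.Icc a b, ‖f n‖^2)

/-- Discrete Agmon inequality (Lemma 4.1): for a zero-mean sequence
`f_0, …, f_M` in a real Hilbert space,
`‖f_n‖ ≤ c_A ‖f‖₀^{1/2} ‖Df‖₀^{1/2}` with `c_A = √(2 + √2/2)`. -/

private lemma tel_sum {E : Type*} [AddCommGroup E] (g : ℕ → E) {a b : ℕ} (h : a ≤ b) :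
    ∑ k ∈ Finset.Ioc a b, (g k - g (k - 1)) = g b - g a := by
  induction b, h using Nat.le_induction with
  | base => simp
  | succ b hab ih =>
    rw [Finset.sum_Ioc_succ_top hab, ih]
    simp

private lemma gauss (N : ℕ) : ∑ m ∈ Finset.range N, (m : ℝ) = N * (N - 1) / 2 := by
  induction N with
  | zero => simp
  | succ N ih => rw [Finset.sum_range_succ, ih]; push_cast; ring

private lemma cs_sqrt (s : Finset ℕ) (u v : ℕ → ℝ) :
    ∑ i ∈ s, u i * v i ≤ Real.sqrt (∑ i ∈ s, u i ^ 2) * Real.sqrt (∑ i ∈ s, v i ^ 2) := by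
  calc ∑ i ∈ s, u i * v i ≤ |∑ i ∈ s, u i * v i| := le_abs_self _
    _ = Real.sqrt ((∑ i ∈ s, u i * v i) ^ 2) := (Real.sqrt_sq_eq_abs _).symm
    _ ≤ Real.sqrt ((∑ i ∈ s, u i ^ 2) * ∑ i ∈ s, v i ^ 2) :=
        Real.sqrt_le_sqrt (Finset.sum_mul_sq_le_sq_mul_sq s u v)
    _ = _ := Real.sqrt_mul (by positivity) _

private lemma dsum_le (N : ℕ) :
    ∑ n ∈ Finset.range N, ∑ m ∈ Finset.range N, |(n : ℝ) - (m : ℝ)| ≤ (N : ℝ) ^ 3 / 2 := by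
  induction N with
  | zero => simp
  | succ N ih =>
    have e1 : ∑ m ∈ Finset.range N, |(N : ℝ) - (m : ℝ)| = N * N - N * (N - 1) / 2 := by
      rw [Finset.sum_congr rfl (fun m hm => abs_of_nonneg (by
        have := Finset.mem_range.mp hm
        have : (m : ℝ) ≤ N := by exact_mod_cast this.le
        linarith))]
      rw [Finset.sum_sub_distrib, Finset.sum_const, Finset.card_range, gauss]
      ring
    have e2 : ∑ n ∈ Finset.range N, |(n : ℝ) - (N : ℝ)| = N * N - N * (N - 1) / 2 := by
      rw [← e1]
      exact Finset.sum_congr rfl fun m _ => abs_sub_comm _ _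
    simp only [Finset.sum_range_succ, Finset.sum_add_distrib]
    rw [e1, e2]
    simp only [sub_self, abs_zero, add_zero]
    have hN : (0:ℝ) ≤ N := Nat.cast_nonneg N
    push_cast
    nlinarith [ih, sq_nonneg (N:ℝ)]

set_option maxHeartbeats 1000000 in
theorem discrete_agmon
    {X : Type*} [NormedAddCommGroup X] [InnerProductSpace ℝ X] [CompleteSpace X]
    (T : ℝ) (hT : 0 < T) (M : ℕ) (hM : 0 < M) (τ : ℝ) (hτ : τ = T / M)
    (f : ℕ → X) (hmean : ∑ n ∈ Finset.range (M + 1), f n = 0)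
    (n : ℕ) (hn : n ≤ M) :
    ‖f n‖ ≤ cA * (seqNorm0 τ 0 M f) ^ ((1:ℝ)/2) * (seqNorm0 τ 1 M (Dq τ f)) ^ ((1:ℝ)/2) := by
  have hMR : (0:ℝ) < M := by exact_mod_cast hM
  have hτpos : 0 < τ := by rw [hτ]; positivity
  have hrange : Finset.range (M + 1) = Finset.Icc 0 M := by
    ext k; simp [Nat.lt_succ_iff]
  set S : ℝ := τ * ∑ k ∈ Finset.Icc 0 M, ‖f k‖ ^ 2 with hSdef
  set D : ℝ := τ * ∑ k ∈ Finset.Icc 1 M, ‖Dq τ f k‖ ^ 2 with hDdef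
  have hSnn : 0 ≤ S := by positivity
  have hDnn : 0 ≤ D := by positivity
  set A : ℝ := Real.sqrt S with hAdef
  set B : ℝ := Real.sqrt D with hBdef
  have hAnn : 0 ≤ A := Real.sqrt_nonneg _
  have hBnn : 0 ≤ B := Real.sqrt_nonneg _
  have hA2 : A ^ 2 = S := Real.sq_sqrt hSnn
  have hB2 : B ^ 2 = D := Real.sq_sqrt hDnn
  -- the step difference in terms of Dq
  have hstep : ∀ k : ℕ, f k - f (k - 1) = τ • Dq τ f k := by
    intro k
    rw [Dq]
    rw [smul_inv_smul₀ (ne_of_gt hτpos)]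
  have hstepn : ∀ k : ℕ, ‖f k - f (k - 1)‖ = τ * ‖Dq τ f k‖ := by
    intro k
    rw [hstep k, norm_smul, Real.norm_eq_abs, abs_of_pos hτpos]
  have hnn : ∀ k : ℕ, (0:ℝ) ≤ ‖f k‖ + ‖f (k - 1)‖ :=
    fun k => add_nonneg (norm_nonneg _) (norm_nonneg _)
  -- (K1)
  have K1 : ∀ k : ℕ, |‖f k‖ ^ 2 - ‖f (k - 1)‖ ^ 2|
      ≤ τ * ‖Dq τ f k‖ * (‖f k‖ + ‖f (k - 1)‖) := by
    intro k
    have he : ‖f k‖ ^ 2 - ‖f (k - 1)‖ ^ 2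
        = (‖f k‖ - ‖f (k - 1)‖) * (‖f k‖ + ‖f (k - 1)‖) := by ring
    rw [he, abs_mul, abs_of_nonneg (hnn k)]
    have h := abs_norm_sub_norm_le (f k) (f (k - 1))
    rw [hstepn k] at h
    exact mul_le_mul_of_nonneg_right h (hnn k)
  -- (K3) : total variation bound
  set E : ℝ := ∑ k ∈ Finset.Icc 1 M, |‖f k‖ ^ 2 - ‖f (k - 1)‖ ^ 2| with hEdef
  have hfactor : ∀ P Q : ℝ, 0 ≤ P → 0 ≤ Q →
      τ * (Real.sqrt P * Real.sqrt Q) = Real.sqrt (τ * P) * Real.sqrt (τ * Q) := by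
    intro P Q hP hQ
    rw [Real.sqrt_mul hτpos.le, Real.sqrt_mul hτpos.le]
    conv_lhs => rw [← Real.mul_self_sqrt hτpos.le]
    ring
  have hsub10 : ∑ k ∈ Finset.Icc 1 M, ‖f k‖ ^ 2 ≤ ∑ k ∈ Finset.Icc 0 M, ‖f k‖ ^ 2 :=
    Finset.sum_le_sum_of_subset_of_nonneg
      (Finset.Icc_subset_Icc (Nat.zero_le 1) le_rfl) (fun _ _ _ => by positivity)
  have hshift : ∑ k ∈ Finset.Icc 1 M, ‖f (k - 1)‖ ^ 2 ≤ ∑ k ∈ Finset.Icc 0 M, ‖f k‖ ^ 2 := by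
    have h : ∑ k ∈ Finset.Icc 1 M, ‖f (k - 1)‖ ^ 2 = ∑ j ∈ Finset.Icc 0 (M - 1), ‖f j‖ ^ 2 := by
      apply Finset.sum_nbij' (fun k => k - 1) (fun j => j + 1) <;> intros <;>
        simp_all [Finset.mem_Icc] <;> omega
    rw [h]
    exact Finset.sum_le_sum_of_subset_of_nonneg
      (Finset.Icc_subset_Icc le_rfl (Nat.sub_le M 1)) (fun _ _ _ => by positivity)
  have K3 : E ≤ 2 * A * B := by
    have h1 : E ≤ ∑ k ∈ Finset.Icc 1 M, τ * ‖Dq τ f k‖ * (‖f k‖ + ‖f (k - 1)‖) :=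
      Finset.sum_le_sum fun k _ => K1 k
    have h2 : ∑ k ∈ Finset.Icc 1 M, τ * ‖Dq τ f k‖ * (‖f k‖ + ‖f (k - 1)‖)
        = τ * ((∑ k ∈ Finset.Icc 1 M, ‖Dq τ f k‖ * ‖f k‖)
          + ∑ k ∈ Finset.Icc 1 M, ‖Dq τ f k‖ * ‖f (k - 1)‖) := by
      rw [← Finset.sum_add_distrib, Finset.mul_sum]
      exact Finset.sum_congr rfl fun k _ => by ring
    have cs1 : ∑ k ∈ Finset.Icc 1 M, ‖Dq τ f k‖ * ‖f k‖
        ≤ Real.sqrt (∑ k ∈ Finset.Icc 1 M, ‖Dq τ f k‖ ^ 2)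
          * Real.sqrt (∑ k ∈ Finset.Icc 1 M, ‖f k‖ ^ 2) := cs_sqrt _ _ _
    have cs2 : ∑ k ∈ Finset.Icc 1 M, ‖Dq τ f k‖ * ‖f (k - 1)‖
        ≤ Real.sqrt (∑ k ∈ Finset.Icc 1 M, ‖Dq τ f k‖ ^ 2)
          * Real.sqrt (∑ k ∈ Finset.Icc 1 M, ‖f (k - 1)‖ ^ 2) := cs_sqrt _ _ _
    have m1 : Real.sqrt (∑ k ∈ Finset.Icc 1 M, ‖f k‖ ^ 2)
        ≤ Real.sqrt (∑ k ∈ Finset.Icc 0 M, ‖f k‖ ^ 2) := Real.sqrt_le_sqrt hsub10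
    have m2 : Real.sqrt (∑ k ∈ Finset.Icc 1 M, ‖f (k - 1)‖ ^ 2)
        ≤ Real.sqrt (∑ k ∈ Finset.Icc 0 M, ‖f k‖ ^ 2) := Real.sqrt_le_sqrt hshift
    have hDs : (0:ℝ) ≤ Real.sqrt (∑ k ∈ Finset.Icc 1 M, ‖Dq τ f k‖ ^ 2) := Real.sqrt_nonneg _
    calc E ≤ τ * ((∑ k ∈ Finset.Icc 1 M, ‖Dq τ f k‖ * ‖f k‖)
          + ∑ k ∈ Finset.Icc 1 M, ‖Dq τ f k‖ * ‖f (k - 1)‖) := by rw [← h2]; exact h1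
      _ ≤ τ * (2 * (Real.sqrt (∑ k ∈ Finset.Icc 1 M, ‖Dq τ f k‖ ^ 2)
          * Real.sqrt (∑ k ∈ Finset.Icc 0 M, ‖f k‖ ^ 2))) := by
          have b1 := mul_le_mul_of_nonneg_left m1 hDs
          have b2 := mul_le_mul_of_nonneg_left m2 hDs
          apply mul_le_mul_of_nonneg_left _ hτpos.le
          linarith [cs1, cs2, b1, b2]
      _ = 2 * (τ * (Real.sqrt (∑ k ∈ Finset.Icc 1 M, ‖Dq τ f k‖ ^ 2)
          * Real.sqrt (∑ k ∈ Finset.Icc 0 M, ‖f k‖ ^ 2))) := by ring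
      _ = 2 * (B * A) := by
          rw [hfactor _ _ (by positivity) (by positivity)]
      _ = 2 * A * B := by ring
  -- (K4 step) : difference of squares bounded by E
  have Kdiff : ∀ m : ℕ, m ≤ M → ‖f n‖ ^ 2 - ‖f m‖ ^ 2 ≤ E := by
    intro m hm
    have key : ∀ a b : ℕ, a ≤ b → b ≤ M → |‖f b‖ ^ 2 - ‖f a‖ ^ 2| ≤ E := by
      intro a b hab hbM
      have htel : ∑ k ∈ Finset.Ioc a b, (‖f k‖ ^ 2 - ‖f (k - 1)‖ ^ 2)
          = ‖f b‖ ^ 2 - ‖f a‖ ^ 2 := tel_sum (fun k => ‖f k‖ ^ 2) hab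
      rw [← htel]
      calc |∑ k ∈ Finset.Ioc a b, (‖f k‖ ^ 2 - ‖f (k - 1)‖ ^ 2)|
          ≤ ∑ k ∈ Finset.Ioc a b, |‖f k‖ ^ 2 - ‖f (k - 1)‖ ^ 2| :=
            Finset.abs_sum_le_sum_abs _ _
        _ ≤ E := Finset.sum_le_sum_of_subset_of_nonneg
            (by intro k hk; simp only [Finset.mem_Ioc, Finset.mem_Icc] at *; omega)
            (fun _ _ _ => abs_nonneg _)
    rcases le_total m n with h | h
    · exact (le_abs_self _).trans (key m n h hn)
    · have h2 := key n m h hm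
      rw [abs_sub_comm] at h2
      exact (le_abs_self _).trans h2
  -- (K4) : averaging
  have hNR : (0:ℝ) < (M:ℝ) + 1 := by positivity
  have K4 : ‖f n‖ ^ 2 ≤ S / (τ * ((M:ℝ) + 1)) + E := by
    have hbound : ((M:ℝ) + 1) * ‖f n‖ ^ 2 ≤ S / τ + ((M:ℝ) + 1) * E := by
      have hle : ∀ m ∈ Finset.range (M + 1), ‖f n‖ ^ 2 ≤ ‖f m‖ ^ 2 + E := by
        intro m hm
        have := Kdiff m (Nat.lt_succ_iff.mp (Finset.mem_range.mp hm))
        linarith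
      have hs : ∑ m ∈ Finset.range (M + 1), ‖f n‖ ^ 2
          ≤ ∑ m ∈ Finset.range (M + 1), (‖f m‖ ^ 2 + E) := Finset.sum_le_sum hle
      rw [Finset.sum_add_distrib, Finset.sum_const, Finset.sum_const,
        Finset.card_range, hrange] at hs
      have hSτ : ∑ m ∈ Finset.Icc 0 M, ‖f m‖ ^ 2 = S / τ := by
        rw [hSdef]; field_simp
      rw [hSτ] at hs
      push_cast at hs ⊢
      simpa [nsmul_eq_mul] using hs
    have heq : ((M:ℝ) + 1) * (S / (τ * ((M:ℝ) + 1)) + E) = S / τ + ((M:ℝ) + 1) * E := by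
      field_simp
    refine le_of_mul_le_mul_left ?_ hNR
    rw [heq]
    exact hbound
  -- Poincaré part
  have hDdiv : ∑ k ∈ Finset.Icc 1 M, ‖Dq τ f k‖ ^ 2 = D / τ := by
    rw [hDdef]; field_simp
  have hnormn : ∀ a : ℕ, ((M:ℝ) + 1) * ‖f a‖ ≤ ∑ m ∈ Finset.range (M + 1), ‖f a - f m‖ := by
    intro a
    have hz : ∑ m ∈ Finset.range (M + 1), (f a - f m) = (M + 1) • f a := by
      rw [Finset.sum_sub_distrib, hmean, sub_zero, Finset.sum_const, Finset.card_range]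
    have hnrm : ‖(M + 1) • f a‖ = ((M:ℝ) + 1) * ‖f a‖ := by
      rw [← Nat.cast_smul_eq_nsmul ℝ, norm_smul, Real.norm_eq_abs]
      push_cast
      rw [abs_of_nonneg (by positivity)]
    calc ((M:ℝ) + 1) * ‖f a‖ = ‖(M + 1) • f a‖ := hnrm.symm
      _ = ‖∑ m ∈ Finset.range (M + 1), (f a - f m)‖ := by rw [hz]
      _ ≤ ∑ m ∈ Finset.range (M + 1), ‖f a - f m‖ := norm_sum_le _ _
  have base : ∀ a b : ℕ, a ≤ b → b ≤ M →
      ‖f b - f a‖ ^ 2 ≤ τ * ((b:ℝ) - (a:ℝ)) * D := by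
    intro a b hab hbM
    have htel := tel_sum f hab
    have hnorm : ‖f b - f a‖ ≤ τ * ∑ k ∈ Finset.Ioc a b, ‖Dq τ f k‖ := by
      rw [← htel]
      calc ‖∑ k ∈ Finset.Ioc a b, (f k - f (k - 1))‖
          ≤ ∑ k ∈ Finset.Ioc a b, ‖f k - f (k - 1)‖ := norm_sum_le _ _
        _ = ∑ k ∈ Finset.Ioc a b, τ * ‖Dq τ f k‖ :=
            Finset.sum_congr rfl fun k _ => hstepn k
        _ = τ * ∑ k ∈ Finset.Ioc a b, ‖Dq τ f k‖ := by rw [Finset.mul_sum]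
    have hba : (0:ℝ) ≤ (b:ℝ) - (a:ℝ) := by
      have : (a:ℝ) ≤ b := by exact_mod_cast hab
      linarith
    have hcs : (∑ k ∈ Finset.Ioc a b, ‖Dq τ f k‖) ^ 2
        ≤ ((b:ℝ) - (a:ℝ)) * ∑ k ∈ Finset.Ioc a b, ‖Dq τ f k‖ ^ 2 := by
      have h := Finset.sum_mul_sq_le_sq_mul_sq (Finset.Ioc a b)
        (fun _ => (1:ℝ)) (fun k => ‖Dq τ f k‖)
      simp only [one_mul, one_pow, Finset.sum_const, Nat.card_Ioc, nsmul_eq_mul,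
        mul_one] at h
      rwa [Nat.cast_sub hab] at h
    have hsubD : ∑ k ∈ Finset.Ioc a b, ‖Dq τ f k‖ ^ 2 ≤ D / τ := by
      rw [← hDdiv]
      exact Finset.sum_le_sum_of_subset_of_nonneg
        (by intro k hk; simp only [Finset.mem_Ioc, Finset.mem_Icc] at *; omega)
        (fun _ _ _ => by positivity)
    calc ‖f b - f a‖ ^ 2 ≤ (τ * ∑ k ∈ Finset.Ioc a b, ‖Dq τ f k‖) ^ 2 :=
          pow_le_pow_left₀ (norm_nonneg _) hnorm 2
      _ = τ ^ 2 * (∑ k ∈ Finset.Ioc a b, ‖Dq τ f k‖) ^ 2 := by ring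
      _ ≤ τ ^ 2 * (((b:ℝ) - (a:ℝ)) * (D / τ)) := by
          refine mul_le_mul_of_nonneg_left ?_ (by positivity)
          exact hcs.trans (mul_le_mul_of_nonneg_left hsubD hba)
      _ = τ * ((b:ℝ) - (a:ℝ)) * D := by field_simp
  have pair : ∀ a b : ℕ, a ≤ M → b ≤ M →
      ‖f a - f b‖ ^ 2 ≤ τ * |(a:ℝ) - (b:ℝ)| * D := by
    intro a b haM hbM
    rcases le_total a b with h | h
    · have := base a b h hbM
      rw [norm_sub_rev]
      have habs : |(a:ℝ) - (b:ℝ)| = (b:ℝ) - (a:ℝ) := by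
        rw [abs_sub_comm, abs_of_nonneg]
        have : (a:ℝ) ≤ b := by exact_mod_cast h
        linarith
      rwa [habs]
    · have := base b a h haM
      have habs : |(a:ℝ) - (b:ℝ)| = (a:ℝ) - (b:ℝ) := by
        rw [abs_of_nonneg]
        have : (b:ℝ) ≤ a := by exact_mod_cast h
        linarith
      rwa [habs]
  have hpt : ∀ a ∈ Finset.range (M + 1), ((M:ℝ) + 1) * ‖f a‖ ^ 2
      ≤ ∑ m ∈ Finset.range (M + 1), τ * |(a:ℝ) - (m:ℝ)| * D := by
    intro a ha
    have haM : a ≤ M := Nat.lt_succ_iff.mp (Finset.mem_range.mp ha)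
    have h1 := hnormn a
    have hcs1 : (∑ m ∈ Finset.range (M + 1), ‖f a - f m‖) ^ 2
        ≤ ((M:ℝ) + 1) * ∑ m ∈ Finset.range (M + 1), ‖f a - f m‖ ^ 2 := by
      have h := Finset.sum_mul_sq_le_sq_mul_sq (Finset.range (M + 1))
        (fun _ => (1:ℝ)) (fun m => ‖f a - f m‖)
      simp only [one_mul, one_pow, Finset.sum_const, Finset.card_range,
        nsmul_eq_mul, mul_one] at h
      push_cast at h
      exact h
    have h2 : ∑ m ∈ Finset.range (M + 1), ‖f a - f m‖ ^ 2
        ≤ ∑ m ∈ Finset.range (M + 1), τ * |(a:ℝ) - (m:ℝ)| * D :=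
      Finset.sum_le_sum fun m hm =>
        pair a m haM (Nat.lt_succ_iff.mp (Finset.mem_range.mp hm))
    have h3 : (((M:ℝ) + 1) * ‖f a‖) ^ 2
        ≤ ((M:ℝ) + 1) * ∑ m ∈ Finset.range (M + 1), τ * |(a:ℝ) - (m:ℝ)| * D := by
      calc (((M:ℝ) + 1) * ‖f a‖) ^ 2
          ≤ (∑ m ∈ Finset.range (M + 1), ‖f a - f m‖) ^ 2 :=
            pow_le_pow_left₀ (by positivity) h1 2
        _ ≤ ((M:ℝ) + 1) * ∑ m ∈ Finset.range (M + 1), ‖f a - f m‖ ^ 2 := hcs1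
        _ ≤ _ := mul_le_mul_of_nonneg_left h2 hNR.le
    refine le_of_mul_le_mul_left ?_ hNR
    calc ((M:ℝ) + 1) * (((M:ℝ) + 1) * ‖f a‖ ^ 2) = (((M:ℝ) + 1) * ‖f a‖) ^ 2 := by ring
      _ ≤ _ := h3
  have K5 : S ≤ τ ^ 2 * ((M:ℝ) + 1) ^ 2 / 2 * D := by
    have hsumall : ((M:ℝ) + 1) * ∑ a ∈ Finset.range (M + 1), ‖f a‖ ^ 2
        ≤ τ * D * ∑ a ∈ Finset.range (M + 1), ∑ m ∈ Finset.range (M + 1), |(a:ℝ) - (m:ℝ)| := by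
      calc ((M:ℝ) + 1) * ∑ a ∈ Finset.range (M + 1), ‖f a‖ ^ 2
          = ∑ a ∈ Finset.range (M + 1), ((M:ℝ) + 1) * ‖f a‖ ^ 2 := Finset.mul_sum _ _ _
        _ ≤ ∑ a ∈ Finset.range (M + 1), ∑ m ∈ Finset.range (M + 1), τ * |(a:ℝ) - (m:ℝ)| * D :=
            Finset.sum_le_sum hpt
        _ = τ * D * ∑ a ∈ Finset.range (M + 1), ∑ m ∈ Finset.range (M + 1), |(a:ℝ) - (m:ℝ)| := by
            rw [Finset.mul_sum]
            refine Finset.sum_congr rfl fun a _ => ?_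
            rw [Finset.mul_sum]
            exact Finset.sum_congr rfl fun m _ => by ring
    have hds := dsum_le (M + 1)
    push_cast at hds
    have hsum_le : ∑ a ∈ Finset.range (M + 1), ‖f a‖ ^ 2
        ≤ τ * D * ((M:ℝ) + 1) ^ 2 / 2 := by
      refine le_of_mul_le_mul_left ?_ hNR
      calc ((M:ℝ) + 1) * ∑ a ∈ Finset.range (M + 1), ‖f a‖ ^ 2
          ≤ τ * D * ∑ a ∈ Finset.range (M + 1), ∑ m ∈ Finset.range (M + 1), |(a:ℝ) - (m:ℝ)| :=
            hsumall
        _ ≤ τ * D * (((M:ℝ) + 1) ^ 3 / 2) :=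
            mul_le_mul_of_nonneg_left hds (by positivity)
        _ = ((M:ℝ) + 1) * (τ * D * ((M:ℝ) + 1) ^ 2 / 2) := by ring
    calc S = τ * ∑ k ∈ Finset.Icc 0 M, ‖f k‖ ^ 2 := hSdef
      _ = τ * ∑ a ∈ Finset.range (M + 1), ‖f a‖ ^ 2 := by rw [hrange]
      _ ≤ τ * (τ * D * ((M:ℝ) + 1) ^ 2 / 2) := mul_le_mul_of_nonneg_left hsum_le hτpos.le
      _ = τ ^ 2 * ((M:ℝ) + 1) ^ 2 / 2 * D := by ring
  -- combine : A ≤ (τ(M+1)/√2) B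
  set c : ℝ := τ * ((M:ℝ) + 1) with hcdef
  have hcpos : 0 < c := by positivity
  have hsqrt2 : (0:ℝ) < Real.sqrt 2 := Real.sqrt_pos.mpr (by norm_num)
  have hAB : A ≤ c / Real.sqrt 2 * B := by
    have h1 : S ≤ (c / Real.sqrt 2 * B) ^ 2 := by
      have h2 : (c / Real.sqrt 2 * B) ^ 2 = c ^ 2 / 2 * B ^ 2 := by
        rw [mul_pow, div_pow, Real.sq_sqrt (by norm_num : (0:ℝ) ≤ 2)]
      rw [h2, hB2, hcdef]
      calc S ≤ τ ^ 2 * ((M:ℝ) + 1) ^ 2 / 2 * D := K5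
        _ = (τ * ((M:ℝ) + 1)) ^ 2 / 2 * D := by ring
    calc A = Real.sqrt S := hAdef
      _ ≤ Real.sqrt ((c / Real.sqrt 2 * B) ^ 2) := Real.sqrt_le_sqrt h1
      _ = c / Real.sqrt 2 * B := Real.sqrt_sq (by positivity)
  have hmain : ‖f n‖ ^ 2 ≤ (2 + Real.sqrt 2 / 2) * (A * B) := by
    have hterm : S / c ≤ Real.sqrt 2 / 2 * (A * B) := by
      have h1 : S / c = A * A / c := by rw [← hA2]; ring_nf
      rw [h1]
      have h2 : A * A / c ≤ (c / Real.sqrt 2 * B) * A / c := by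
        apply div_le_div_of_nonneg_right ?_ hcpos.le
        exact mul_le_mul_of_nonneg_right hAB hAnn
      refine h2.trans (le_of_eq ?_)
      have hss : Real.sqrt 2 * Real.sqrt 2 = 2 := Real.mul_self_sqrt (by norm_num)
      field_simp
      linear_combination -(A * B) * hss
    have := K4
    rw [hcdef] at hterm
    nlinarith [K3, hterm, K4]
  -- final assembly
  simp only [seqNorm0]
  rw [← hSdef, ← hDdef, ← hAdef, ← hBdef, cA]
  rw [← Real.sqrt_eq_rpow, ← Real.sqrt_eq_rpow]
  have hfin : Real.sqrt (2 + Real.sqrt 2 / 2) * Real.sqrt A * Real.sqrt B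
      = Real.sqrt ((2 + Real.sqrt 2 / 2) * (A * B)) := by
    rw [Real.sqrt_mul (by positivity), Real.sqrt_mul hAnn]
    ring
  rw [hfin]
  calc ‖f n‖ = Real.sqrt (‖f n‖ ^ 2) := (Real.sqrt_sq (norm_nonneg _)).symm
    _ ≤ Real.sqrt ((2 + Real.sqrt 2 / 2) * (A * B)) := Real.sqrt_le_sqrt hmain
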